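/- In an induced wheel of G' (the weak color-avoiding connectivity graph) with center u and outer cycle w_1,...,w_l (l ≥ 4): if w_1 and w_3 are not weakly color-avoiding connected, then the only color whose removal can disconnect them is the color of w_2, and moreover the center u must have the same color as w_2. -/

import Mathlib

/-- `u` and `v` are weakly `i`-avoiding connected. -/
def WeaklyAvoids {V C : Type} (G : SimpleGraph V) (c : V → C) (i : C) (u v : V) : Prop :=
  c u = i ∨ c v = i ∨ ∃ p : G.Walk u v, ∀ x ∈ p.support, c x ≠ i

/-- `u` and `v` are weakly color-avoiding connected. -/
def WeaklyCAConnected {V C : Type} (G : SimpleGraph V) (c : V → C) (u v : V) : Prop :=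
  G.Reachable u v ∧ ∀ i : C, WeaklyAvoids G c i u v

/-- The derived graph `G'`: adjacency is weak color-avoiding connectivity. -/
def weakGraph {V C : Type} (G : SimpleGraph V) (c : V → C) : SimpleGraph V where
  Adj u v := u ≠ v ∧ WeaklyCAConnected G c u v
  symm := by
    constructor
    rintro u v ⟨h, hr, hw⟩
    refine ⟨h.symm, hr.symm, fun i => ?_⟩
    rcases hw i with h1 | h1 | ⟨p, hp⟩
    · exact Or.inr (Or.inl h1)
    · exact Or.inl h1
    · exact Or.inr (Or.inr ⟨p.reverse, fun x hx => hp x (by simpa using hx)⟩)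
  loopless := by
    constructor
    rintro u ⟨h, -⟩
    exact h rfl

/-- In an induced wheel of `G'` with center `u` and outer cycle `w 0, w 1, ..., w (l-1)`
(`l ≥ 4`): if `w 0` and `w 2` are not weakly color-avoiding connected, then the only
color whose removal can disconnect them is `c (w 1)`, and the center `u` has the same
color as `w 1`. -/
theorem wheel_center_color {V C : Type} (G : SimpleGraph V) (c : V → C)
    (l : ℕ) (hl : 4 ≤ l) (u : V) (w : ZMod l → V)
    (hinj : Function.Injective w)
    (hne : ∀ j, w j ≠ u)
    (hspoke : ∀ j, (weakGraph G c).Adj u (w j))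
    (hcyc : ∀ j, (weakGraph G c).Adj (w j) (w (j + 1)))
    (hind : ∀ j k, k ≠ j → k ≠ j + 1 → k + 1 ≠ j → ¬ (weakGraph G c).Adj (w j) (w k))
    (hnc : ¬ WeaklyCAConnected G c (w 0) (w 2)) :
    (∀ i : C, ¬ WeaklyAvoids G c i (w 0) (w 2) → i = c (w 1)) ∧ c u = c (w 1) := by
  have h01 := (hcyc 0).2
  rw [zero_add] at h01
  have h12 := (hcyc 1).2
  rw [one_add_one_eq_two] at h12
  have hr : G.Reachable (w 0) (w 2) := h01.1.trans h12.1
  have key : ∀ i : C, ¬ WeaklyAvoids G c i (w 0) (w 2) → i = c (w 1) := by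
    intro i hi
    by_contra hne1
    unfold WeaklyAvoids at hi
    push_neg at hi
    obtain ⟨h0, h2, hall⟩ := hi
    rcases h01.2 i with h | h | ⟨p, hp⟩
    · exact h0 h
    · exact hne1 h.symm
    rcases h12.2 i with h | h | ⟨q, hq⟩
    · exact hne1 h.symm
    · exact h2 h
    obtain ⟨x, hx, hcx⟩ := hall (p.append q)
    rw [SimpleGraph.Walk.mem_support_append_iff] at hx
    rcases hx with hx | hx
    · exact hp x hx hcx
    · exact hq x hx hcx
  refine ⟨key, ?_⟩
  by_contra hcu
  have : ∃ i : C, ¬ WeaklyAvoids G c i (w 0) (w 2) := by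
    by_contra h
    push_neg at h
    exact hnc ⟨hr, h⟩
  obtain ⟨i, hi⟩ := this
  have hiw := key i hi
  unfold WeaklyAvoids at hi
  push_neg at hi
  obtain ⟨h0, h2, hall⟩ := hi
  rcases (hspoke 0).2.2 i with h | h | ⟨p, hp⟩
  · exact hcu (h.trans hiw)
  · exact h0 h
  rcases (hspoke 2).2.2 i with h | h | ⟨q, hq⟩
  · exact hcu (h.trans hiw)
  · exact h2 h
  obtain ⟨x, hx, hcx⟩ := hall (p.reverse.append q)
  rw [SimpleGraph.Walk.mem_support_append_iff] at hx
  rcases hx with hx | hx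
  · exact hp x (by simpa using hx) hcx
  · exact hq x hx hcx
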